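/- For all integers ℓ and k with 2 ≤ ℓ < k, the inequality C(k,ℓ)·(1 − (ℓ/k)^{1/ℓ})^{k−ℓ} < 1 holds. -/

import Mathlib

open Real Finset

lemma ent_nat (d l : ℕ) : (d + l).choose d * d ^ d * l ^ l ≤ (d + l) ^ (d + l) := by
  have hmem : d ∈ Finset.range (d + l + 1) := by simp
  calc (d + l).choose d * d ^ d * l ^ l
      = d ^ d * l ^ (d + l - d) * (d + l).choose d := by
        rw [Nat.add_sub_cancel_left]; ring
    _ ≤ ∑ j ∈ Finset.range (d + l + 1), d ^ j * l ^ (d + l - j) * (d + l).choose j :=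
        Finset.single_le_sum (f := fun j => d ^ j * l ^ (d + l - j) * (d + l).choose j)
          (fun i _ => Nat.zero_le _) hmem
    _ = (d + l) ^ (d + l) := (add_pow d l (d + l)).symm

lemma log_quad {a : ℝ} (h0 : 0 ≤ a) (h1 : a ≤ 1) : a ≤ Real.log (1 + a + a ^ 2) := by
  have hexp : Real.exp a ≤ 1 + a + a ^ 2 := by
    have h := Real.exp_bound' h0 h1 (n := 3) (by norm_num)
    have e1 : (∑ m ∈ Finset.range 3, a ^ m / m.factorial) = 1 + a + a ^ 2 / 2 := by
      simp [Finset.sum_range_succ, Nat.factorial]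
    rw [e1] at h
    have h3 : a ^ 3 ≤ a ^ 2 := pow_le_pow_of_le_one h0 h1 (by norm_num)
    push_cast at h
    norm_num [Nat.factorial] at h
    nlinarith [h]
  calc a = Real.log (Real.exp a) := (Real.log_exp a).symm
    _ ≤ Real.log (1 + a + a ^ 2) := Real.log_le_log (Real.exp_pos a) hexp

lemma poly_w {w : ℝ} (hw : 1 < w) : 0 < w ^ 6 - 6 * w ^ 3 + 6 * w ^ 2 - 1 := by
  nlinarith [pow_pos (by linarith : (0:ℝ) < w - 1) 2,
    pow_pos (by linarith : (0:ℝ) < w - 1) 3, pow_pos (by linarith : (0:ℝ) < w - 1) 4,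
    pow_pos (by linarith : (0:ℝ) < w - 1) 5, pow_pos (by linarith : (0:ℝ) < w - 1) 6]

lemma cast_choose_three (n : ℕ) (hn : 2 ≤ n) :
    ((n.choose 3 : ℕ) : ℝ) = (n:ℝ) * ((n:ℝ) - 1) * ((n:ℝ) - 2) / 6 := by
  have hd : n.descFactorial 3 = n * (n - 1) * (n - 2) := by
    simp [Nat.descFactorial_succ, Nat.descFactorial_zero]
    ring
  have he : n.descFactorial 3 = 6 * n.choose 3 := by
    rw [Nat.descFactorial_eq_factorial_mul_choose]
    norm_num [Nat.factorial]
  rw [eq_div_iff (by norm_num : (6:ℝ) ≠ 0)]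
  have h2 : ((6 * n.choose 3 : ℕ) : ℝ) = ((n * (n - 1) * (n - 2) : ℕ) : ℝ) := by
    rw [← he, hd]
  push_cast [Nat.cast_sub (by omega : 1 ≤ n), Nat.cast_sub (by omega : 2 ≤ n)] at h2
  linarith

lemma cast_choose_four (n : ℕ) (hn : 3 ≤ n) :
    ((n.choose 4 : ℕ) : ℝ) = (n:ℝ) * ((n:ℝ) - 1) * ((n:ℝ) - 2) * ((n:ℝ) - 3) / 24 := by
  have hd : n.descFactorial 4 = n * (n - 1) * (n - 2) * (n - 3) := by
    simp [Nat.descFactorial_succ, Nat.descFactorial_zero]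
    ring
  have he : n.descFactorial 4 = 24 * n.choose 4 := by
    rw [Nat.descFactorial_eq_factorial_mul_choose]
    norm_num [Nat.factorial]
  rw [eq_div_iff (by norm_num : (24:ℝ) ≠ 0)]
  have h2 : ((24 * n.choose 4 : ℕ) : ℝ) = ((n * (n - 1) * (n - 2) * (n - 3) : ℕ) : ℝ) := by
    rw [← he, hd]
  push_cast [Nat.cast_sub (by omega : 1 ≤ n), Nat.cast_sub (by omega : 2 ≤ n),
    Nat.cast_sub (by omega : 3 ≤ n)] at h2
  linarith

lemma lb_even (n : ℕ) (hn : 4 ≤ n) {r : ℝ} (hr : 0 ≤ r) :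
    1 + (n.choose 2 : ℝ) * r ^ 2 + (n.choose 4 : ℝ) * r ^ 4 ≤ (1 + r) ^ n := by
  have hb : (r + 1 : ℝ) ^ n = ∑ j ∈ Finset.range (n + 1), r ^ j * 1 ^ (n - j) * (n.choose j) :=
    add_pow r 1 n
  have hsub : ({0, 2, 4} : Finset ℕ) ⊆ Finset.range (n + 1) := by
    intro x hx
    fin_cases hx <;> simp <;> omega
  have hle : ∑ j ∈ ({0, 2, 4} : Finset ℕ), r ^ j * 1 ^ (n - j) * (n.choose j) ≤
      ∑ j ∈ Finset.range (n + 1), r ^ j * 1 ^ (n - j) * (n.choose j) := by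
    apply Finset.sum_le_sum_of_subset_of_nonneg hsub
    intro i _ _
    positivity
  have hs : ∑ j ∈ ({0, 2, 4} : Finset ℕ), r ^ j * 1 ^ (n - j) * (n.choose j)
      = 1 + (n.choose 2 : ℝ) * r ^ 2 + (n.choose 4 : ℝ) * r ^ 4 := by
    rw [Finset.sum_insert (by decide), Finset.sum_insert (by decide), Finset.sum_singleton]
    simp
    ring
  calc 1 + (n.choose 2 : ℝ) * r ^ 2 + (n.choose 4 : ℝ) * r ^ 4
      = ∑ j ∈ ({0, 2, 4} : Finset ℕ), r ^ j * 1 ^ (n - j) * (n.choose j) := hs.symm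
    _ ≤ ∑ j ∈ Finset.range (n + 1), r ^ j * 1 ^ (n - j) * (n.choose j) := hle
    _ = (1 + r) ^ n := by rw [← hb]; ring_nf

lemma lb_five (n : ℕ) (hn : 4 ≤ n) {s : ℝ} (hs : 0 ≤ s) :
    1 + (n.choose 1 : ℝ) * s + (n.choose 2 : ℝ) * s ^ 2 + (n.choose 3 : ℝ) * s ^ 3
      + (n.choose 4 : ℝ) * s ^ 4 ≤ (1 + s) ^ n := by
  have hb : (s + 1 : ℝ) ^ n = ∑ j ∈ Finset.range (n + 1), s ^ j * 1 ^ (n - j) * (n.choose j) :=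
    add_pow s 1 n
  have hsub : Finset.range 5 ⊆ Finset.range (n + 1) := by
    apply Finset.range_subset_range.2; omega
  have hle := Finset.sum_le_sum_of_subset_of_nonneg hsub
    (f := fun j => s ^ j * 1 ^ (n - j) * (n.choose j : ℝ)) (fun i _ _ => by positivity)
  have hs5 : ∑ j ∈ Finset.range 5, s ^ j * 1 ^ (n - j) * (n.choose j : ℝ)
      = 1 + (n.choose 1 : ℝ) * s + (n.choose 2 : ℝ) * s ^ 2 + (n.choose 3 : ℝ) * s ^ 3
        + (n.choose 4 : ℝ) * s ^ 4 := by
    rw [Finset.sum_range_succ, Finset.sum_range_succ, Finset.sum_range_succ,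
      Finset.sum_range_succ, Finset.sum_range_one]
    simp
    ring
  calc 1 + (n.choose 1 : ℝ) * s + (n.choose 2 : ℝ) * s ^ 2 + (n.choose 3 : ℝ) * s ^ 3
        + (n.choose 4 : ℝ) * s ^ 4
      = ∑ j ∈ Finset.range 5, s ^ j * 1 ^ (n - j) * (n.choose j : ℝ) := hs5.symm
    _ ≤ ∑ j ∈ Finset.range (n + 1), s ^ j * 1 ^ (n - j) * (n.choose j : ℝ) := hle
    _ = (1 + s) ^ n := by rw [← hb]; ring_nf

lemma final_poly {K : ℝ} (hK : 6 ≤ K) :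
    K * (K - 1) / 2 <
      (1 + (K - 2) * (K - 3) / 2 * (2 / K) + (K - 2) * (K - 3) * (K - 4) * (K - 5) / 24 * (2 / K) ^ 2)
      * (1 + (K - 2) * (2 / (K - 2)) + (K - 2) * (K - 3) / 2 * (2 / (K - 2)) ^ 2
        + (K - 2) * (K - 3) * (K - 4) / 6 * (2 / (K - 2)) ^ 3
        + (K - 2) * (K - 3) * (K - 4) * (K - 5) / 24 * (2 / (K - 2)) ^ 4) := by
  have hK0 : (0:ℝ) < K := by linarith
  have hN0 : (0:ℝ) < K - 2 := by linarith
  have hm : (0:ℝ) ≤ K - 6 := by linarith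
  rw [← sub_pos]
  have key : (1 + (K - 2) * (K - 3) / 2 * (2 / K) + (K - 2) * (K - 3) * (K - 4) * (K - 5) / 24 * (2 / K) ^ 2)
      * (1 + (K - 2) * (2 / (K - 2)) + (K - 2) * (K - 3) / 2 * (2 / (K - 2)) ^ 2
        + (K - 2) * (K - 3) * (K - 4) / 6 * (2 / (K - 2)) ^ 3
        + (K - 2) * (K - 3) * (K - 4) * (K - 5) / 24 * (2 / (K - 2)) ^ 4)
      - K * (K - 1) / 2
      = (12*(K-6)^7 + 243*(K-6)^6 + 2151*(K-6)^5 + 10824*(K-6)^4 + 33486*(K-6)^3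
          + 63480*(K-6)^2 + 67752*(K-6) + 31104) / (18 * K ^ 2 * (K - 2) ^ 3) := by
    field_simp
    ring
  rw [key]
  positivity

lemma main_ge3 (k l : ℕ) (hl : 3 ≤ l) (hlk : l < k) :
    (Nat.choose k l : ℝ) * (1 - ((l:ℝ) / (k:ℝ)) ^ (1 / (l:ℝ))) ^ (k - l) < 1 := by
  set d : ℕ := k - l with hd_def
  have hdl : d + l = k := Nat.sub_add_cancel hlk.le
  have hd1 : 1 ≤ d := by omega
  have hk0 : (0:ℝ) < k := by exact_mod_cast (by omega : 0 < k)
  have hl0 : (0:ℝ) < l := by exact_mod_cast (by omega : 0 < l)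
  have hlk' : (l:ℝ) < k := by exact_mod_cast hlk
  have hc0 : (0:ℝ) < (l:ℝ) / k := by positivity
  have hc1 : (l:ℝ) / k < 1 := (div_lt_one hk0).2 hlk'
  set x : ℝ := (k:ℝ) / l with hx_def
  have hx1 : 1 < x := (one_lt_div hl0).2 hlk'
  have hx0 : 0 < x := by linarith
  have hcx : (l:ℝ) / k = x⁻¹ := by rw [hx_def, inv_div]
  set t : ℝ := x ^ ((1:ℝ)/3) with ht_def
  have ht1 : 1 < t := Real.one_lt_rpow hx1 (by norm_num)
  have ht0 : 0 < t := by linarith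
  have ht3 : t ^ 3 = x := by
    rw [ht_def, ← Real.rpow_natCast (x ^ ((1:ℝ)/3)) 3, ← Real.rpow_mul hx0.le]
    norm_num
  set a : ℝ := t⁻¹ with ha_def
  have ha0 : 0 < a := by positivity
  have ha1 : a < 1 := by rw [ha_def]; exact inv_lt_one_of_one_lt₀ ht1
  have hax : a = ((l:ℝ)/k) ^ ((1:ℝ)/3) := by
    rw [ha_def, hcx, ht_def, ← Real.rpow_neg_one (x ^ ((1:ℝ)/3)), ← Real.rpow_mul hx0.le,
      ← Real.rpow_neg_one x, ← Real.rpow_mul hx0.le]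
    norm_num
  have ha3 : a ^ 3 = (l:ℝ) / k := by
    rw [ha_def, hcx]; rw [inv_pow, ht3]
  -- r ≥ a
  set r : ℝ := ((l:ℝ) / k) ^ (1 / (l:ℝ)) with hr_def
  have har : a ≤ r := by
    rw [hax, hr_def]
    apply Real.rpow_le_rpow_of_exponent_ge hc0 hc1.le
    have hl3 : (3:ℝ) ≤ l := by exact_mod_cast hl
    rw [div_le_div_iff₀ hl0 (by norm_num)]
    linarith
  have hr1 : r ≤ 1 := Real.rpow_le_one hc0.le hc1.le (by positivity)
  -- reduce to a
  have step1 : (Nat.choose k l : ℝ) * (1 - r) ^ d ≤ (Nat.choose k l : ℝ) * (1 - a) ^ d := by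
    apply mul_le_mul_of_nonneg_left _ (by positivity)
    exact pow_le_pow_left₀ (by linarith) (by linarith) d
  -- key log inequality
  set w : ℝ := Real.sqrt t with hw_def
  have hw1 : 1 < w := by
    rw [hw_def]; rw [show (1:ℝ) = Real.sqrt 1 by simp]
    exact Real.sqrt_lt_sqrt (by norm_num) ht1
  have hw0 : 0 < w := by linarith
  have hwt : w ^ 2 = t := Real.sq_sqrt ht0.le
  have hlogx : Real.log x = 6 * Real.log w := by
    rw [← ht3, ← hwt, ← pow_mul, Real.log_pow]
    norm_num
  have hkey : Real.log x < t ^ 2 - a := by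
    have hp := poly_w hw1
    have hlw : Real.log w ≤ w - 1 := Real.log_le_sub_one_of_pos hw0
    have h6 : 6 * (w - 1) < w ^ 4 - (w ^ 2)⁻¹ := by
      rw [lt_sub_iff_add_lt, ← sub_pos]
      have hw2 : (0:ℝ) < w ^ 2 := by positivity
      have : w ^ 4 - (6 * (w - 1) + (w ^ 2)⁻¹) =
          (w ^ 6 - 6 * w ^ 3 + 6 * w ^ 2 - 1) / w ^ 2 := by
        field_simp; ring
      rw [this]
      positivity
    have ht2w : t ^ 2 = w ^ 4 := by rw [← hwt]; ring
    have haw : a = (w ^ 2)⁻¹ := by rw [ha_def, hwt]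
    rw [hlogx, ht2w, haw]
    linarith
  have hda : (d:ℝ) = l * (x - 1) := by
    rw [hx_def]
    field_simp
    push_cast [← hdl]
    ring
  have hkey2 : (l:ℝ) * Real.log x < (d:ℝ) * a := by
    have h1 : (d:ℝ) * a = l * ((x - 1) * a) := by rw [hda]; ring
    have h2 : (x - 1) * a = t ^ 2 - a := by
      rw [← ht3, ha_def]
      field_simp
    rw [h1, h2]
    have := mul_lt_mul_of_pos_left hkey hl0
    linarith
  have hkey3 : (l:ℝ) * Real.log x < (d:ℝ) * Real.log (1 + a + a ^ 2) := by
    calc (l:ℝ) * Real.log x < (d:ℝ) * a := hkey2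
      _ ≤ (d:ℝ) * Real.log (1 + a + a ^ 2) := by
          apply mul_le_mul_of_nonneg_left (log_quad ha0.le ha1.le) (by positivity)
  have hfin : x ^ l < (1 + a + a ^ 2) ^ d := by
    have hx_pow : (0:ℝ) < x ^ l := by positivity
    have hq0 : (0:ℝ) < 1 + a + a ^ 2 := by positivity
    rw [← Real.exp_log hx_pow, ← Real.exp_log (by positivity : (0:ℝ) < (1 + a + a ^ 2) ^ d)]
    apply Real.exp_lt_exp.2
    rw [Real.log_pow, Real.log_pow]
    exact hkey3
  -- entropy bound
  have hent : (Nat.choose k l : ℝ) * (d:ℝ) ^ d * (l:ℝ) ^ l ≤ (k:ℝ) ^ k := by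
    have h := ent_nat d l
    rw [hdl] at h
    have hcc : k.choose d = k.choose l := by
      rw [hd_def]
      exact Nat.choose_symm hlk.le
    rw [hcc] at h
    exact_mod_cast h
  -- final assembly
  have hq0 : (0:ℝ) < 1 + a + a ^ 2 := by positivity
  have hprod : (1 - a) * (1 + a + a ^ 2) = (d:ℝ) / k := by
    have : (1 - a) * (1 + a + a ^ 2) = 1 - a ^ 3 := by ring
    rw [this, ha3, hda, hx_def]
    field_simp
  have h1a : (1 - a) = ((d:ℝ) / k) / (1 + a + a ^ 2) := by
    rw [eq_div_iff (ne_of_gt hq0)]; exact hprod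
  have hll : (0:ℝ) < (l:ℝ) ^ l := by positivity
  have hxl : x ^ l = (k:ℝ) ^ l / (l:ℝ) ^ l := by rw [hx_def, div_pow]
  have hkk : (k:ℝ) ^ k = (k:ℝ) ^ d * (k:ℝ) ^ l := by rw [← pow_add, hdl]
  have h3 : (Nat.choose k l : ℝ) * (d:ℝ) ^ d ≤ (k:ℝ) ^ d * x ^ l := by
    rw [hxl, ← mul_div_assoc, le_div_iff₀ hll]
    rw [hkk] at hent
    linarith
  have hmain : (Nat.choose k l : ℝ) * (1 - a) ^ d < 1 := by
    have heq : (Nat.choose k l : ℝ) * (1 - a) ^ d =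
        (Nat.choose k l : ℝ) * ((d:ℝ) / k) ^ d / (1 + a + a ^ 2) ^ d := by
      rw [h1a, div_pow, mul_div_assoc]
    rw [heq, div_lt_one (by positivity)]
    calc (Nat.choose k l : ℝ) * ((d:ℝ) / k) ^ d
        = (Nat.choose k l : ℝ) * (d:ℝ) ^ d / (k:ℝ) ^ d := by
          rw [div_pow, mul_div_assoc]
      _ ≤ (k:ℝ) ^ d * x ^ l / (k:ℝ) ^ d := by
          gcongr
      _ = x ^ l := by field_simp
      _ < (1 + a + a ^ 2) ^ d := hfin
  calc (Nat.choose k l : ℝ) * (1 - r) ^ d ≤ (Nat.choose k l : ℝ) * (1 - a) ^ d := step1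
    _ < 1 := hmain

set_option maxHeartbeats 1000000 in
lemma main_eq2 (k : ℕ) (hk : 2 < k) :
    (Nat.choose k 2 : ℝ) * (1 - ((2:ℝ) / (k:ℝ)) ^ (1 / (2:ℝ))) ^ (k - 2) < 1 := by
  have hk0 : (0:ℝ) < k := by exact_mod_cast (by omega : 0 < k)
  have hrs : ((2:ℝ) / (k:ℝ)) ^ (1 / (2:ℝ)) = Real.sqrt (2 / k) :=
    (Real.sqrt_eq_rpow _).symm
  rw [hrs]
  set r : ℝ := Real.sqrt (2 / k) with hr_def
  have hc0 : (0:ℝ) < 2 / k := by positivity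
  have hr0 : 0 < r := Real.sqrt_pos.2 hc0
  have hr2 : r ^ 2 = 2 / k := Real.sq_sqrt hc0.le
  have hr1 : r < 1 := by
    have hck : (2:ℝ) / k ≤ 2 / 3 := by
      apply div_le_div_of_nonneg_left (by norm_num) (by norm_num)
      exact_mod_cast hk
    nlinarith [hr2, hr0]
  by_cases hk6 : k < 6
  · interval_cases k
    · have h45 : (4/5 : ℝ) < r := by
        rw [hr_def]
        apply (Real.lt_sqrt (by norm_num)).2
        norm_num
      have h0 : (0:ℝ) ≤ 1 - r := by linarith
      have hp : (1 - r) ^ (3 - 2) ≤ (1/5 : ℝ) ^ (3 - 2) :=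
        pow_le_pow_left₀ h0 (by linarith) _
      calc (Nat.choose 3 2 : ℝ) * (1 - r) ^ (3 - 2)
          ≤ (Nat.choose 3 2 : ℝ) * (1/5 : ℝ) ^ (3 - 2) := by
            apply mul_le_mul_of_nonneg_left hp (by positivity)
        _ < 1 := by norm_num
    · have h45 : (7/10 : ℝ) < r := by
        rw [hr_def]
        apply (Real.lt_sqrt (by norm_num)).2
        norm_num
      have h0 : (0:ℝ) ≤ 1 - r := by linarith
      have hp : (1 - r) ^ (4 - 2) ≤ (3/10 : ℝ) ^ (4 - 2) :=
        pow_le_pow_left₀ h0 (by linarith) _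
      calc (Nat.choose 4 2 : ℝ) * (1 - r) ^ (4 - 2)
          ≤ (Nat.choose 4 2 : ℝ) * (3/10 : ℝ) ^ (4 - 2) := by
            apply mul_le_mul_of_nonneg_left hp (by positivity)
        _ < 1 := by norm_num [Nat.choose]
    · have h45 : (3/5 : ℝ) < r := by
        rw [hr_def]
        apply (Real.lt_sqrt (by norm_num)).2
        norm_num
      have h0 : (0:ℝ) ≤ 1 - r := by linarith
      have hp : (1 - r) ^ (5 - 2) ≤ (2/5 : ℝ) ^ (5 - 2) :=
        pow_le_pow_left₀ h0 (by linarith) _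
      calc (Nat.choose 5 2 : ℝ) * (1 - r) ^ (5 - 2)
          ≤ (Nat.choose 5 2 : ℝ) * (2/5 : ℝ) ^ (5 - 2) := by
            apply mul_le_mul_of_nonneg_left hp (by positivity)
        _ < 1 := by norm_num [Nat.choose]
  · push_neg at hk6
    set n : ℕ := k - 2 with hn_def
    have hn4 : 4 ≤ n := by omega
    have hK6 : (6:ℝ) ≤ (k:ℝ) := by exact_mod_cast hk6
    have hN : (n:ℝ) = (k:ℝ) - 2 := by
      push_cast [hn_def, Nat.cast_sub (by omega : 2 ≤ k)]
      ring
    have hN0 : (0:ℝ) < (n:ℝ) := by rw [hN]; linarith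
    set E : ℝ := 1 + (n.choose 2 : ℝ) * r ^ 2 + (n.choose 4 : ℝ) * r ^ 4 with hE_def
    set F : ℝ := 1 + (n.choose 1 : ℝ) * (2/(n:ℝ)) + (n.choose 2 : ℝ) * (2/(n:ℝ)) ^ 2
      + (n.choose 3 : ℝ) * (2/(n:ℝ)) ^ 3 + (n.choose 4 : ℝ) * (2/(n:ℝ)) ^ 4 with hF_def
    have hE0 : 0 < E := by positivity
    have hF0 : 0 < F := by positivity
    have hE : E ≤ (1 + r) ^ n := lb_even n hn4 hr0.le
    have hF : F ≤ (1 + 2/(n:ℝ)) ^ n := lb_five n hn4 (by positivity)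
    have h1r : (1 - r) = (((k:ℝ) - 2)/k) / (1 + r) := by
      rw [eq_div_iff (by linarith : (1:ℝ) + r ≠ 0)]
      have h : (1 - r) * (1 + r) = 1 - r ^ 2 := by ring
      rw [h, hr2]
      field_simp
    have hs_eq : 1 + 2/(n:ℝ) = (k:ℝ)/(n:ℝ) := by
      rw [hN, eq_div_iff (by linarith : ((k:ℝ) - 2) ≠ 0), add_mul, div_mul_cancel₀]
      · ring
      · linarith
    have hb1 : ((1:ℝ) - r) ^ n = (((k:ℝ) - 2)/k) ^ n / (1 + r) ^ n := by
      rw [h1r, div_pow]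
    have hb2 : (((k:ℝ) - 2)/k) ^ n ≤ 1 / F := by
      rw [le_div_iff₀ hF0]
      calc (((k:ℝ) - 2)/k) ^ n * F ≤ (((k:ℝ) - 2)/k) ^ n * ((k:ℝ)/(n:ℝ)) ^ n := by
            apply mul_le_mul_of_nonneg_left _
              (pow_nonneg (div_nonneg (by linarith) hk0.le) n)
            rw [← hs_eq]; exact hF
        _ = 1 := by
            rw [← mul_pow]
            have h : ((k:ℝ) - 2)/(k:ℝ) * ((k:ℝ)/(n:ℝ)) = 1 := by
              rw [hN, div_mul_div_comm, mul_comm]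
              exact div_self (by nlinarith : ((k:ℝ)) * ((k:ℝ) - 2) ≠ 0)
            rw [h, one_pow]
    have hb3 : ((1:ℝ) - r) ^ n ≤ 1/(F * E) := by
      rw [hb1, ← div_div]
      apply div_le_div₀ (by positivity) _ hE0 hE
      exact hb2
    have hr4 : r ^ 4 = (2/(k:ℝ))^2 := by rw [← hr2]; ring
    have hEeq : E = 1 + ((k:ℝ) - 2) * ((k:ℝ) - 3) / 2 * (2 / (k:ℝ))
        + ((k:ℝ) - 2) * ((k:ℝ) - 3) * ((k:ℝ) - 4) * ((k:ℝ) - 5) / 24 * (2 / (k:ℝ)) ^ 2 := by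
      rw [hE_def, hr4, hr2, Nat.cast_choose_two, cast_choose_four n (by omega), hN]
      ring
    have hFeq : F = 1 + ((k:ℝ) - 2) * (2 / ((k:ℝ) - 2))
        + ((k:ℝ) - 2) * ((k:ℝ) - 3) / 2 * (2 / ((k:ℝ) - 2)) ^ 2
        + ((k:ℝ) - 2) * ((k:ℝ) - 3) * ((k:ℝ) - 4) / 6 * (2 / ((k:ℝ) - 2)) ^ 3
        + ((k:ℝ) - 2) * ((k:ℝ) - 3) * ((k:ℝ) - 4) * ((k:ℝ) - 5) / 24 * (2 / ((k:ℝ) - 2)) ^ 4 := by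
      rw [hF_def, Nat.choose_one_right, Nat.cast_choose_two, cast_choose_three n (by omega),
        cast_choose_four n (by omega), hN]
      ring
    have hCF : (Nat.choose k 2 : ℝ) < E * F := by
      rw [hEeq, hFeq, Nat.cast_choose_two]
      exact final_poly hK6
    calc (Nat.choose k 2 : ℝ) * (1 - r) ^ n
        ≤ (Nat.choose k 2 : ℝ) * (1/(F * E)) := by
          apply mul_le_mul_of_nonneg_left hb3 (by positivity)
      _ = (Nat.choose k 2 : ℝ) / (F * E) := by rw [mul_one_div]
      _ < 1 := by
          rw [div_lt_one (by positivity)]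
          nlinarith [hCF]

theorem choose_mul_pow_lt_one (k ℓ : ℕ) (hℓ : 2 ≤ ℓ) (hℓk : ℓ < k) :
    (Nat.choose k ℓ : ℝ) * (1 - ((ℓ:ℝ) / (k:ℝ)) ^ (1 / (ℓ:ℝ))) ^ (k - ℓ) < 1 := by
  rcases eq_or_lt_of_le hℓ with h2 | h3
  · subst h2
    have h := main_eq2 k hℓk
    convert h using 4
    norm_num
  · exact main_ge3 k ℓ h3 hℓk
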